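/- E[Y²·Φ(X)] − E[V²]·∫_{[0,1]^d} Φ(x) dx = ∫_{[0,1]^d} r(x)·Φ(x) dx. In particular, the statistic Y²·Φ(X) − E[V²]·∫Φ is an unbiased estimator of the coefficient ∫ r·Φ. (This is the content of Lemma 1 of the paper under assumption set H1, stated for a general bounded coefficient function Φ; taking Φ = Φ_{j,k} with ∫Φ_{j,k} = 2^{-jd/2} gives the paper's statement for α̂_{j,k}, and taking Φ = Ψ_{j,k,u} with ∫Ψ = 0 gives the statement for the β-coefficients.) -/

import Mathlib

open MeasureTheory ProbabilityTheory

/-- Lemma 1 of the paper, assumption set H1.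
`E[Y² Φ(X)] − E[V²] ∫_{[0,1]^d} Φ = ∫_{[0,1]^d} r Φ`, i.e. the statistic
`Y² Φ(X) − E[V²] ∫ Φ` is an unbiased estimator of the wavelet-type
coefficient `∫ r Φ`. -/
theorem unbiased_coefficient_H1
    {Ω : Type*} [MeasurableSpace Ω] (P : Measure Ω) [IsProbabilityMeasure P]
    (d : ℕ) (hd : 1 ≤ d)
    (X : Ω → (Fin d → ℝ)) (U V : Ω → ℝ)
    (hXm : Measurable X) (hUm : Measurable U) (hVm : Measurable V)
    -- X is uniformly distributed on the cube [0,1]^d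
    (hXlaw : Measure.map X P = volume.restrict (Set.Icc (0 : Fin d → ℝ) 1))
    -- E[V²] < ∞
    (hV2 : Integrable (fun ω => (V ω) ^ 2) P)
    -- X, U, V mutually independent
    (hXU : IndepFun X U P)
    (hXUV : IndepFun (fun ω => (X ω, U ω)) V P)
    -- f bounded measurable on the cube, Y = f(X)·U + V, r = f²
    (f : (Fin d → ℝ) → ℝ) (hfm : Measurable f)
    (Cf : ℝ) (hf : ∀ x ∈ Set.Icc (0 : Fin d → ℝ) 1, |f x| ≤ Cf)
    (Y : Ω → ℝ) (hY : ∀ ω, Y ω = f (X ω) * U ω + V ω)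
    (r : (Fin d → ℝ) → ℝ) (hr : ∀ x, r x = (f x) ^ 2)
    -- E[U²] = 1 and (E[U] = 0 or E[V] = 0)
    (hU2int : Integrable (fun ω => (U ω) ^ 2) P)
    (hU2 : ∫ ω, (U ω) ^ 2 ∂P = 1)
    (hcent : (∫ ω, U ω ∂P = 0) ∨ (∫ ω, V ω ∂P = 0))
    -- Φ bounded measurable on the cube
    (Φ : (Fin d → ℝ) → ℝ) (hΦm : Measurable Φ)
    (CΦ : ℝ) (hΦ : ∀ x ∈ Set.Icc (0 : Fin d → ℝ) 1, |Φ x| ≤ CΦ) :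
    (∫ ω, (Y ω) ^ 2 * Φ (X ω) ∂P)
        - (∫ ω, (V ω) ^ 2 ∂P) * (∫ x in Set.Icc (0 : Fin d → ℝ) 1, Φ x)
      = ∫ x in Set.Icc (0 : Fin d → ℝ) 1, r x * Φ x := by
  classical
  set s : Set (Fin d → ℝ) := Set.Icc 0 1 with hs
  have hsm : MeasurableSet s := measurableSet_Icc
  -- X lands in s almost surely
  have hXs : ∀ᵐ ω ∂P, X ω ∈ s := by
    have : P (X ⁻¹' sᶜ) = 0 := by
      have := Measure.map_apply hXm hsm.compl (μ := P)
      rw [hXlaw] at this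
      rw [← this, Measure.restrict_apply hsm.compl]
      simp
    filter_upwards [measure_eq_zero_iff_ae_notMem.mp this] with ω h using not_not.mp h
  -- indicator versions, globally bounded
  set f' : (Fin d → ℝ) → ℝ := s.indicator f with hf'
  set Φ' : (Fin d → ℝ) → ℝ := s.indicator Φ with hΦ'
  have hf'm : Measurable f' := hfm.indicator hsm
  have hΦ'm : Measurable Φ' := hΦm.indicator hsm
  have hf'b : ∀ x, |f' x| ≤ max Cf 0 := by
    intro x
    by_cases hx : x ∈ s
    · simp only [hf', Set.indicator_of_mem hx]
      exact le_max_of_le_left (hf x hx)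
    · simp [hf', Set.indicator_of_notMem hx]
  have hΦ'b : ∀ x, |Φ' x| ≤ max CΦ 0 := by
    intro x
    by_cases hx : x ∈ s
    · simp only [hΦ', Set.indicator_of_mem hx]
      exact le_max_of_le_left (hΦ x hx)
    · simp [hΦ', Set.indicator_of_notMem hx]
  set A : Ω → ℝ := fun ω => f' (X ω) with hA
  set B : Ω → ℝ := fun ω => Φ' (X ω) with hB
  -- integrability of U and V
  have hUint : Integrable U P :=
    ((memLp_two_iff_integrable_sq hUm.aestronglyMeasurable).mpr hU2int).integrable one_le_two
  have hVint : Integrable V P :=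
    ((memLp_two_iff_integrable_sq hVm.aestronglyMeasurable).mpr hV2).integrable one_le_two
  have hUV : IndepFun U V P := hXUV.comp measurable_snd measurable_id
  have hUVint : Integrable (fun ω => U ω * V ω) P := hUV.integrable_mul hUint hVint
  -- integrability of the three terms
  have hABm : Measurable (fun ω => A ω * B ω) := (hf'm.comp hXm).mul (hΦ'm.comp hXm)
  have hA2Bm : Measurable (fun ω => A ω ^ 2 * B ω) :=
    ((hf'm.comp hXm).pow_const 2).mul (hΦ'm.comp hXm)
  have hT1 : Integrable (fun ω => (A ω ^ 2 * B ω) * U ω ^ 2) P :=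
    hU2int.bdd_mul hA2Bm.aestronglyMeasurable
      (c := (max Cf 0) ^ 2 * max CΦ 0) (ae_of_all _ fun ω => by
        rw [Real.norm_eq_abs, abs_mul, abs_pow]
        exact mul_le_mul (pow_le_pow_left₀ (abs_nonneg _) (hf'b _) 2) (hΦ'b _)
          (abs_nonneg _) (by positivity))
  have hT2 : Integrable (fun ω => (A ω * B ω) * (U ω * V ω)) P :=
    hUVint.bdd_mul hABm.aestronglyMeasurable
      (c := max Cf 0 * max CΦ 0) (ae_of_all _ fun ω => by
        rw [Real.norm_eq_abs, abs_mul]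
        exact mul_le_mul (hf'b _) (hΦ'b _) (abs_nonneg _) (le_max_right _ _))
  have hT3 : Integrable (fun ω => B ω * V ω ^ 2) P :=
    hV2.bdd_mul (hΦ'm.comp hXm).aestronglyMeasurable (c := max CΦ 0) (ae_of_all _ fun ω => hΦ'b _)
  -- pointwise a.e. decomposition
  have hdecomp : ∀ᵐ ω ∂P, (Y ω) ^ 2 * Φ (X ω)
      = (A ω ^ 2 * B ω) * U ω ^ 2 + 2 * ((A ω * B ω) * (U ω * V ω)) + B ω * V ω ^ 2 := by
    filter_upwards [hXs] with ω hω
    have hfA : A ω = f (X ω) := Set.indicator_of_mem hω f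
    have hΦB : B ω = Φ (X ω) := Set.indicator_of_mem hω Φ
    rw [hY ω, ← hfA, ← hΦB]
    ring
  have hT2' : Integrable (fun ω => 2 * ((A ω * B ω) * (U ω * V ω))) P := hT2.const_mul 2
  have hT12 : Integrable
      (fun ω => (A ω ^ 2 * B ω) * U ω ^ 2 + 2 * ((A ω * B ω) * (U ω * V ω))) P :=
    hT1.add hT2'
  rw [integral_congr_ae hdecomp]
  rw [integral_add hT12 hT3, integral_add hT1 hT2']
  -- term 1
  have hAB_U2 : IndepFun (fun ω => A ω ^ 2 * B ω) (fun ω => U ω ^ 2) P :=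
    hXU.comp (((hf'm.pow_const 2).mul hΦ'm)) (measurable_id.pow_const 2)
  have hABU2int : Integrable (fun ω => A ω ^ 2 * B ω) P :=
    (integrable_const (1:ℝ)).bdd_mul hA2Bm.aestronglyMeasurable
      (c := (max Cf 0) ^ 2 * max CΦ 0) (ae_of_all _ fun ω => by
        rw [Real.norm_eq_abs, abs_mul, abs_pow]
        exact mul_le_mul (pow_le_pow_left₀ (abs_nonneg _) (hf'b _) 2) (hΦ'b _)
          (abs_nonneg _) (by positivity)) |>.congr (by filter_upwards with ω; ring_nf)
  have hterm1 : ∫ ω, (A ω ^ 2 * B ω) * U ω ^ 2 ∂P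
      = ∫ ω, A ω ^ 2 * B ω ∂P := by
    have := hAB_U2.integral_mul_eq_mul_integral hABU2int.1 hU2int.1
    simpa [Pi.mul_apply, hU2] using this
  -- term 2 : = 2 * (∫ A*B) * (∫ U) * (∫ V) = 0
  have hABint : Integrable (fun ω => A ω * B ω) P :=
    (integrable_const (1:ℝ)).bdd_mul hABm.aestronglyMeasurable
      (c := max Cf 0 * max CΦ 0) (ae_of_all _ fun ω => by
        rw [Real.norm_eq_abs, abs_mul]
        exact mul_le_mul (hf'b _) (hΦ'b _) (abs_nonneg _) (le_max_right _ _))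
      |>.congr (by filter_upwards with ω; ring_nf)
  have hABU_indep : IndepFun (fun ω => A ω * B ω * U ω) V P :=
    hXUV.comp (((hf'm.comp measurable_fst).mul (hΦ'm.comp measurable_fst)).mul
      measurable_snd) measurable_id
  have hABUint : Integrable (fun ω => A ω * B ω * U ω) P :=
    hUint.bdd_mul hABm.aestronglyMeasurable
      (c := max Cf 0 * max CΦ 0) (ae_of_all _ fun ω => by
        rw [Real.norm_eq_abs, abs_mul]
        exact mul_le_mul (hf'b _) (hΦ'b _) (abs_nonneg _) (le_max_right _ _))
  have hAB_U : IndepFun (fun ω => A ω * B ω) U P :=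
    hXU.comp (hf'm.mul hΦ'm) measurable_id
  have hterm2 : ∫ ω, 2 * ((A ω * B ω) * (U ω * V ω)) ∂P = 0 := by
    rw [integral_const_mul]
    have h1 : ∫ ω, (A ω * B ω) * (U ω * V ω) ∂P
        = (∫ ω, A ω * B ω * U ω ∂P) * ∫ ω, V ω ∂P := by
      have := hABU_indep.integral_mul_eq_mul_integral hABUint.1 hVint.1
      rw [← this]
      apply integral_congr_ae
      filter_upwards with ω
      simp [Pi.mul_apply]; ring
    have h2 : ∫ ω, A ω * B ω * U ω ∂P
        = (∫ ω, A ω * B ω ∂P) * ∫ ω, U ω ∂P := by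
      have := hAB_U.integral_mul_eq_mul_integral hABint.1 hUint.1
      simpa [Pi.mul_apply] using this
    rw [h1, h2]
    rcases hcent with h | h <;> rw [h] <;> ring
  -- term 3
  have hB_V2 : IndepFun B (fun ω => V ω ^ 2) P :=
    hXUV.comp (hΦ'm.comp measurable_fst) (measurable_id.pow_const 2)
  have hBint : Integrable B P :=
    (integrable_const (1:ℝ)).bdd_mul (hΦ'm.comp hXm).aestronglyMeasurable
      (c := max CΦ 0) (ae_of_all _ fun ω => hΦ'b _) |>.congr
      (by filter_upwards with ω; simp [hB, Function.comp])
  have hterm3 : ∫ ω, B ω * V ω ^ 2 ∂P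
      = (∫ ω, B ω ∂P) * ∫ ω, V ω ^ 2 ∂P := by
    have := hB_V2.integral_mul_eq_mul_integral hBint.1 hV2.1
    simpa [Pi.mul_apply] using this
  -- transfer integrals over Ω to integrals over the cube
  have htransfer : ∀ g : (Fin d → ℝ) → ℝ, Measurable g →
      ∫ ω, g (X ω) ∂P = ∫ x in s, g x := by
    intro g hg
    rw [← integral_map hXm.aemeasurable hg.aestronglyMeasurable, hXlaw]
  have hA2B : ∫ ω, A ω ^ 2 * B ω ∂P = ∫ x in s, r x * Φ x := by
    rw [htransfer (fun x => f' x ^ 2 * Φ' x) ((hf'm.pow_const 2).mul hΦ'm)]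
    apply setIntegral_congr_fun hsm
    intro x hx
    simp only [hf', hΦ', Set.indicator_of_mem hx, hr]
  have hBeq : ∫ ω, B ω ∂P = ∫ x in s, Φ x := by
    rw [htransfer Φ' hΦ'm]
    exact setIntegral_congr_fun hsm fun x hx => Set.indicator_of_mem hx Φ
  rw [hterm1, hterm2, hterm3, hA2B, hBeq]
  ring
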